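/- For an alphabet of size q and length r, the number of Lyndon words of length r over the alphabet satisfies q^r/r - q^{r/2} ≤ |L_r(q)| ≤ q^r/r + q^{r/2}. -/

import Mathlib

/-- A Lyndon word: strictly smaller than all of its nontrivial cyclic rotations. -/
def IsLyndon {q : ℕ} (w : List (Fin q)) : Prop :=
  ∀ k, 0 < k → k < w.length → w < w.rotate k

namespace LyndonCountAux

open List

instance {q : ℕ} (w : List (Fin q)) : Decidable (IsLyndon w) :=
  decidable_of_iff (∀ k < w.length, 0 < k → w < w.rotate k)
    ⟨fun h k hk hkl => h k hkl hk, fun h k hkl hk => h k hk hkl⟩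

instance {q : ℕ} (r : ℕ) (w : List (Fin q)) :
    Decidable (∃ k, 0 < k ∧ k < r ∧ w.rotate k = w) :=
  decidable_of_iff (∃ k < r, 0 < k ∧ w.rotate k = w)
    ⟨fun ⟨k, h1, h2, h3⟩ => ⟨k, h2, h1, h3⟩, fun ⟨k, h1, h2, h3⟩ => ⟨k, h2, h1, h3⟩⟩

/-- All words of length `r`. -/
noncomputable def allW (q r : ℕ) : Finset (List (Fin q)) :=
  Finset.univ.image (fun f : Fin r → Fin q => List.ofFn f)

lemma mem_allW {q r : ℕ} {w : List (Fin q)} : w ∈ allW q r ↔ w.length = r := by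
  simp only [allW, Finset.mem_image, Finset.mem_univ, true_and]
  constructor
  · rintro ⟨f, rfl⟩; simp
  · intro h
    refine ⟨fun i => w.get (Fin.cast h.symm i), ?_⟩
    apply List.ext_getElem (by simp [h])
    intro i h1 h2
    simp [List.getElem_ofFn]

lemma card_allW (q r : ℕ) : (allW q r).card = q ^ r := by
  rw [allW, Finset.card_image_of_injective _ List.ofFn_injective, Finset.card_univ]
  simp

/-- The Lyndon words of length `r`. -/
noncomputable def F (q r : ℕ) : Finset (List (Fin q)) :=
  (allW q r).filter IsLyndon

lemma mem_F {q r : ℕ} {w : List (Fin q)} : w ∈ F q r ↔ w.length = r ∧ IsLyndon w := by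
  rw [F, Finset.mem_filter, mem_allW]

/-- The periodic words of length `r`. -/
noncomputable def Pd (q r : ℕ) : Finset (List (Fin q)) :=
  (allW q r).filter (fun w => ∃ k, 0 < k ∧ k < r ∧ w.rotate k = w)

lemma mem_Pd {q r : ℕ} {w : List (Fin q)} :
    w ∈ Pd q r ↔ w.length = r ∧ ∃ k, 0 < k ∧ k < r ∧ w.rotate k = w := by
  rw [Pd, Finset.mem_filter, mem_allW]

lemma rotate_of_mod_eq_zero {q : ℕ} {w : List (Fin q)} {a : ℕ}
    (h : a % w.length = 0) : w.rotate a = w := by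
  rw [← List.rotate_mod, h, List.rotate_zero]

/-- If two rotations agree, the difference rotation is trivial. -/
lemma rotate_sub_eq {q : ℕ} {w : List (Fin q)} {a b : ℕ} (hab : a ≤ b)
    (h : w.rotate a = w.rotate b) : w.rotate (b - a) = w := by
  rcases Nat.eq_zero_or_pos w.length with hL | hL
  · rw [List.length_eq_zero_iff] at hL
    subst hL; simp
  set L := w.length with hLdef
  have hmod : a % L < L := Nat.mod_lt _ hL
  have hdm := Nat.div_add_mod a L
  have key : a + (L - a % L) = L * (a / L + 1) := by
    rw [Nat.mul_add, Nat.mul_one]; omega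
  have h1 : w.rotate (a + (L - a % L)) = w := by
    rw [key, hLdef, List.rotate_length_mul]
  have h2 : w.rotate (b + (L - a % L)) = w := by
    rw [← List.rotate_rotate, ← h, List.rotate_rotate, h1]
  have h3 : b + (L - a % L) = (a + (L - a % L)) + (b - a) := by omega
  rw [h3, ← List.rotate_rotate, h1] at h2
  exact h2

lemma mod_helper {a r : ℕ} (h : a % r = 0) (h1 : 0 < a) (h2 : a < 2 * r) : a = r := by
  rcases lt_or_ge a r with hl | hl
  · rw [Nat.mod_eq_of_lt hl] at h; omega
  · rw [Nat.mod_eq_sub_mod hl, Nat.mod_eq_of_lt (by omega)] at h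
    omega

/-- A Lyndon word has no nontrivial rotational symmetry. -/
lemma IsLyndon.rot_ne {q r : ℕ} {w : List (Fin q)} (hw : IsLyndon w)
    (hwl : w.length = r) {k : ℕ} (hk : 0 < k) (hkr : k < r) : w.rotate k ≠ w := by
  intro h
  have := hw k hk (by omega)
  rw [h] at this
  exact lt_irrefl _ this

lemma lyndon_rot_inj {q r : ℕ} (hr : 0 < r) {u v : List (Fin q)}
    (hu : IsLyndon u) (hv : IsLyndon v) (hul : u.length = r) (hvl : v.length = r)
    {k j : ℕ} (hk : k < r) (hj : j < r) (h : u.rotate k = v.rotate j) :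
    u = v ∧ k = j := by
  have hurot : u.rotate r = u := by rw [← hul]; exact List.rotate_length u
  have hvrot : v.rotate r = v := by rw [← hvl]; exact List.rotate_length v
  have hmodv : v.rotate ((j + (r - k)) % r) = v.rotate (j + (r - k)) := by
    rw [← hvl]; exact List.rotate_mod v _
  have hmodu : u.rotate ((k + (r - j)) % r) = u.rotate (k + (r - j)) := by
    rw [← hul]; exact List.rotate_mod u _
  have hueq : u = v.rotate ((j + (r - k)) % r) := by
    rw [hmodv, ← List.rotate_rotate, ← h, List.rotate_rotate,
      show k + (r - k) = r by omega, hurot]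
  have hveq : v = u.rotate ((k + (r - j)) % r) := by
    rw [hmodu, ← List.rotate_rotate, h, List.rotate_rotate,
      show j + (r - j) = r by omega, hvrot]
  set t := (j + (r - k)) % r with htdef
  set s := (k + (r - j)) % r with hsdef
  have hts : t < r := Nat.mod_lt _ hr
  have hss : s < r := Nat.mod_lt _ hr
  by_cases ht0 : t = 0
  · rw [ht0, List.rotate_zero] at hueq
    have hkj : k = j := by
      have := mod_helper (a := j + (r - k)) (r := r) (by omega) (by omega) (by omega)
      omega
    exact ⟨hueq, hkj⟩
  · exfalso
    have h1 : v < u := by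
      rw [hueq]
      exact hv t (by omega) (by omega)
    by_cases hs0 : s = 0
    · rw [hs0, List.rotate_zero] at hveq
      rw [hveq] at h1
      exact lt_irrefl _ h1
    · have h2 : u < v := by
        rw [hveq]
        exact hu s (by omega) (by omega)
      exact lt_asymm h1 h2

/-- Words with period `k` are determined by their first `h ≥ k` letters. -/
lemma period_ext {q r : ℕ} {w w' : List (Fin q)} {k h : ℕ} (hk : 0 < k) (hkh : k ≤ h)
    (hw : w.length = r) (hw' : w'.length = r)
    (hp : w.rotate k = w) (hp' : w'.rotate k = w')
    (ht : w.take h = w'.take h) : w = w' := by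
  apply List.ext_getElem (by omega)
  intro i
  induction i using Nat.strong_induction_on with
  | _ i IH =>
    intro hi hi'
    by_cases hih : i < h
    · have h1 : (w.take h)[i]'(by simp; omega) = (w'.take h)[i]'(by simp; omega) := by
        congr 1
      simpa using h1
    · have hki : k ≤ i := by omega
      have e1 : w[i] = w[i - k] := by
        have h2 := List.getElem_rotate w k (i - k) (by simp; omega)
        have h3 : (i - k + k) % w.length = i := by
          rw [show i - k + k = i by omega]; exact Nat.mod_eq_of_lt hi
        simp only [hp, h3] at h2
        exact h2.symm
      have e2 : w'[i] = w'[i - k] := by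
        have h2 := List.getElem_rotate w' k (i - k) (by simp; omega)
        have h3 : (i - k + k) % w'.length = i := by
          rw [show i - k + k = i by omega]; exact Nat.mod_eq_of_lt hi'
        simp only [hp', h3] at h2
        exact h2.symm
      rw [e1, e2]
      exact IH (i - k) (by omega) (by omega) (by omega)

/-- A periodic word has a period at most `r / 2`. -/
lemma exists_small_period {q r : ℕ} {w : List (Fin q)} (hw : w.length = r)
    {k : ℕ} (hk0 : 0 < k) (hkr : k < r) (hrot : w.rotate k = w) :
    ∃ k', 0 < k' ∧ k' ≤ r / 2 ∧ w.rotate k' = w := by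
  by_cases hk2 : k ≤ r / 2
  · exact ⟨k, hk0, hk2, hrot⟩
  · refine ⟨r - k, by omega, by omega, ?_⟩
    have : (w.rotate k).rotate (r - k) = w := by
      rw [List.rotate_rotate, show k + (r - k) = r by omega, ← hw, List.rotate_length]
    rwa [hrot] at this

/-- Every aperiodic word is a rotation of a Lyndon word. -/
lemma exists_lyndon_rotation {q r : ℕ} (hr : 0 < r) {w : List (Fin q)}
    (hw : w.length = r) (hap : ∀ k, 0 < k → k < r → w.rotate k ≠ w) :
    ∃ u ∈ F q r, ∃ k < r, u.rotate k = w := by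
  obtain ⟨m, hm, hmin⟩ := Finset.exists_min_image (Finset.range r)
    (fun m => w.rotate m) ⟨0, by simp [hr]⟩
  rw [Finset.mem_range] at hm
  set u := w.rotate m with hu
  have hul : u.length = r := by simp [hu, hw]
  have hlyndon : IsLyndon u := by
    intro j hj hjl
    rw [hul] at hjl
    have heq : u.rotate j = w.rotate ((m + j) % r) := by
      rw [hu, List.rotate_rotate, ← hw, List.rotate_mod]
    have hle : u ≤ u.rotate j := by
      rw [heq]
      exact hmin _ (Finset.mem_range.2 (Nat.mod_lt _ hr))
    rcases lt_or_eq_of_le hle with h | h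
    · exact h
    · exfalso
      have : w.rotate (m + j) = w.rotate m := by
        rw [← List.rotate_rotate, ← hu, ← h]
      have h2 : w.rotate (m + j - m) = w := rotate_sub_eq (by omega) this.symm
      rw [show m + j - m = j by omega] at h2
      exact hap j hj hjl h2
  refine ⟨u, mem_F.2 ⟨hul, hlyndon⟩, (r - m) % r, Nat.mod_lt _ hr, ?_⟩
  rw [← hul, List.rotate_mod, hul, hu, List.rotate_rotate,
    show m + (r - m) = r by omega, ← hw, List.rotate_length]

lemma card_upper (q r : ℕ) (hr : 0 < r) : (F q r).card * r ≤ q ^ r := by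
  rw [← card_allW q r]
  have h1 : (F q r).card * r = ((F q r) ×ˢ Finset.range r).card := by
    rw [Finset.card_product, Finset.card_range]
  rw [h1]
  apply Finset.card_le_card_of_injOn (fun p => p.1.rotate p.2)
  · rintro ⟨u, k⟩ hp
    rw [Finset.mem_coe, Finset.mem_product] at hp
    rw [Finset.mem_coe, mem_allW]
    simp [(mem_F.1 hp.1).1]
  · rintro ⟨u, k⟩ hp ⟨v, j⟩ hp' h
    simp only [Finset.coe_product, Set.mem_prod, Finset.mem_coe, Finset.mem_range] at hp hp'
    obtain ⟨hu, hk⟩ := hp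
    obtain ⟨hv, hj⟩ := hp'
    obtain ⟨hul, hulyndon⟩ := mem_F.1 hu
    obtain ⟨hvl, hvlyndon⟩ := mem_F.1 hv
    obtain ⟨h1, h2⟩ := lyndon_rot_inj hr hulyndon hvlyndon hul hvl hk hj h
    simp [h1, h2]

lemma cover (q r : ℕ) (hr : 0 < r) :
    allW q r ⊆ ((F q r) ×ˢ Finset.range r).image (fun p => p.1.rotate p.2) ∪ Pd q r := by
  intro w hw
  rw [mem_allW] at hw
  rw [Finset.mem_union]
  by_cases hper : ∃ k, 0 < k ∧ k < r ∧ w.rotate k = w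
  · exact Or.inr (mem_Pd.2 ⟨hw, hper⟩)
  · left
    push_neg at hper
    obtain ⟨u, hu, k, hk, hrot⟩ := exists_lyndon_rotation hr hw
      (fun k h1 h2 => hper k h1 h2)
    rw [Finset.mem_image]
    exact ⟨(u, k), Finset.mem_product.2 ⟨hu, Finset.mem_range.2 hk⟩, hrot⟩

lemma card_Pd (q r : ℕ) (hr : 0 < r) : (Pd q r).card ≤ (r / 2 + 1) * q ^ (r / 2) := by
  classical
  have htarget : ((Finset.range (r / 2 + 1)) ×ˢ allW q (r / 2)).card
      = (r / 2 + 1) * q ^ (r / 2) := by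
    rw [Finset.card_product, Finset.card_range, card_allW]
  rw [← htarget]
  apply Finset.card_le_card_of_injOn
    (fun w => (if h : ∃ k, 0 < k ∧ k ≤ r / 2 ∧ w.rotate k = w then Nat.find h else 0,
      w.take (r / 2)))
  · intro w hw
    obtain ⟨hwl, k, hk0, hkr, hrot⟩ := mem_Pd.1 hw
    have hex : ∃ k, 0 < k ∧ k ≤ r / 2 ∧ w.rotate k = w :=
      exists_small_period hwl hk0 hkr hrot
    rw [Finset.mem_coe, Finset.mem_product]
    constructor
    · simp only [hex, dif_pos, Finset.mem_range]
      have := (Nat.find_spec hex).2.1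
      omega
    · rw [mem_allW, List.length_take, hwl]
      omega
  · intro w hw w' hw' heq
    simp only [Finset.mem_coe] at hw hw'
    obtain ⟨hwl, k, hk0, hkr, hrot⟩ := mem_Pd.1 hw
    obtain ⟨hwl', k', hk0', hkr', hrot'⟩ := mem_Pd.1 hw'
    have hex : ∃ k, 0 < k ∧ k ≤ r / 2 ∧ w.rotate k = w :=
      exists_small_period hwl hk0 hkr hrot
    have hex' : ∃ k, 0 < k ∧ k ≤ r / 2 ∧ w'.rotate k = w' :=
      exists_small_period hwl' hk0' hkr' hrot'
    simp only [hex, hex', dif_pos, Prod.mk.injEq] at heq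
    obtain ⟨hfind, htake⟩ := heq
    obtain ⟨hs1, hs2, hs3⟩ := Nat.find_spec hex
    obtain ⟨hs1', hs2', hs3'⟩ := Nat.find_spec hex'
    rw [hfind] at hs3
    exact period_ext hs1' (le_trans hs2' le_rfl) hwl hwl' hs3 hs3' htake

lemma card_lower (q r : ℕ) (hr : 0 < r) :
    q ^ r ≤ (F q r).card * r + r * q ^ (r / 2) := by
  have h1 : q ^ r ≤ (((F q r) ×ˢ Finset.range r).image
      (fun p => p.1.rotate p.2) ∪ Pd q r).card := by
    rw [← card_allW q r]
    exact Finset.card_le_card (cover q r hr)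
  have h2 : (((F q r) ×ˢ Finset.range r).image (fun p => p.1.rotate p.2) ∪ Pd q r).card
      ≤ (F q r).card * r + (Pd q r).card := by
    refine le_trans (Finset.card_union_le _ _) ?_
    gcongr
    refine le_trans (Finset.card_image_le) ?_
    rw [Finset.card_product, Finset.card_range]
  have h3 := card_Pd q r hr
  have h4 : (r / 2 + 1) * q ^ (r / 2) ≤ r * q ^ (r / 2) :=
    Nat.mul_le_mul_right _ (by omega)
  omega

end LyndonCountAux

open LyndonCountAux in
theorem lyndon_count_bounds (q r : ℕ) (hr : 1 ≤ r) :
    (q : ℝ) ^ r / r - Real.sqrt ((q : ℝ) ^ r) ≤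
      ({w : List (Fin q) | w.length = r ∧ IsLyndon w}.ncard : ℝ) ∧
    ({w : List (Fin q) | w.length = r ∧ IsLyndon w}.ncard : ℝ) ≤
      (q : ℝ) ^ r / r + Real.sqrt ((q : ℝ) ^ r) := by
  have hr0 : 0 < r := hr
  have hset : {w : List (Fin q) | w.length = r ∧ IsLyndon w} = ↑(F q r) := by
    ext w
    simp [mem_F]
  rw [hset, Set.ncard_coe_finset]
  rcases Nat.eq_zero_or_pos q with hq | hq
  · subst hq
    have hF : F 0 r = ∅ := by
      ext w
      simp only [mem_F, Finset.notMem_empty, iff_false, not_and]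
      intro hw
      exfalso
      have : w ≠ [] := by
        intro h; rw [h] at hw; simp at hw; omega
      obtain ⟨a, _, _⟩ := List.exists_cons_of_ne_nil this
      exact absurd a.2 (by omega)
    rw [hF]
    simp [Real.sqrt_eq_zero', zero_pow (by omega : r ≠ 0)]
  · have hq1 : (1 : ℝ) ≤ (q : ℝ) := by exact_mod_cast hq
    have hrR : (0 : ℝ) < r := by exact_mod_cast hr0
    have hsqrt : ((q : ℝ)) ^ (r / 2) ≤ Real.sqrt ((q : ℝ) ^ r) := by
      rw [show ((q : ℝ)) ^ (r / 2) = Real.sqrt (((q : ℝ) ^ (r / 2)) ^ 2) by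
        rw [Real.sqrt_sq (by positivity)]]
      apply Real.sqrt_le_sqrt
      rw [← pow_mul]
      exact pow_le_pow_right₀ hq1 (by omega)
    constructor
    · have h := card_lower q r hr0
      have hR : (q : ℝ) ^ r ≤ (F q r).card * r + r * (q : ℝ) ^ (r / 2) := by
        exact_mod_cast h
      rw [div_sub' (ne_of_gt hrR), div_le_iff₀ hrR]
      nlinarith [Real.sqrt_nonneg ((q : ℝ) ^ r), (by positivity : (0:ℝ) ≤ ((F q r).card : ℝ)),
        mul_le_mul_of_nonneg_left hsqrt (le_of_lt hrR)]
    · have h := card_upper q r hr0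
      have hR : ((F q r).card : ℝ) * r ≤ (q : ℝ) ^ r := by exact_mod_cast h
      have h2 : ((F q r).card : ℝ) ≤ (q : ℝ) ^ r / r := by
        rw [le_div_iff₀ hrR]; exact hR
      have := Real.sqrt_nonneg ((q : ℝ) ^ r)
      linarith
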